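/- Let t ∈ (0,1), and for each n let Z_{n,1},…,Z_{n,n} be independent ℝ^d-valued random vectors with Z_{n,j} distributed according to P1 for j ≤ ⌊nt⌋ and according to P2 for j > ⌊nt⌋, where P1, P2 have finite second moments and common covariance matrix Σ. Then for all s1, s2 ∈ [0,1], lim_{n→∞} n · Cov(Û_n(s1), Û_n(s2)) = (min(s1,s2) − s1 s2) Σ, where Cov(Û_n(s1), Û_n(s2)) = E[(Û_n(s1) − E Û_n(s1))(Û_n(s2) − E Û_n(s2))ᵀ]. -/

import Mathlib

open MeasureTheory ProbabilityTheory Filter Topology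

private lemma integrable_mul_of_memL2 {α : Type*} [MeasurableSpace α] {μ : Measure α}
    {f g : α → ℝ} (hf : MemLp f 2 μ) (hg : MemLp g 2 μ) :
    Integrable (fun x => f x * g x) μ := by
  have h := hf.smul (r := 1) hg
  have h2 := memLp_one_iff_integrable.mp h
  have h3 : Integrable (f * g) μ := by simpa [smul_eq_mul, mul_comm] using h2
  exact h3

private lemma floor_ratio_tendsto (s : ℝ) (hs : 0 ≤ s) :
    Tendsto (fun n : ℕ => (⌊(n:ℝ) * s⌋₊ : ℝ) / n) atTop (𝓝 s) := by
  apply tendsto_of_tendsto_of_tendsto_of_le_of_le'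
    (g := fun n : ℕ => s - 1/(n:ℝ)) (h := fun _ : ℕ => s)
  · simpa using tendsto_const_nhds.sub (tendsto_one_div_atTop_nhds_zero_nat (𝕜 := ℝ))
  · exact tendsto_const_nhds
  · filter_upwards [eventually_ge_atTop 1] with n hn
    have hn0 : (0:ℝ) < (n:ℝ) := by exact_mod_cast hn
    rw [sub_le_iff_le_add, ← add_div, le_div_iff₀ hn0]
    have := Nat.sub_one_lt_floor ((n:ℝ) * s)
    nlinarith [this]
  · filter_upwards [eventually_ge_atTop 1] with n hn
    have hn0 : (0:ℝ) < (n:ℝ) := by exact_mod_cast hn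
    rw [div_le_iff₀ hn0]
    have := Nat.floor_le (mul_nonneg (le_of_lt hn0) hs)
    linarith [this]

private lemma sum_indicator_lt {n m : ℕ} (h : m ≤ n) :
    ∑ k : Fin n, (if (k : ℕ) < m then (1:ℝ) else 0) = m := by
  rw [Fin.sum_univ_eq_sum_range (fun k => if k < m then (1:ℝ) else 0)]
  rw [Finset.sum_boole]
  have : (Finset.range n).filter (fun i => i < m) = Finset.range m := by
    ext k; simp only [Finset.mem_filter, Finset.mem_range]; omega
  rw [this, Finset.card_range]

private lemma sum_ind_prod {n a b : ℕ} (ha : a ≤ n) (hb : b ≤ n) (s1 s2 : ℝ) :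
    ∑ k : Fin n, ((if (k:ℕ) < a then (1:ℝ) else 0) - s1) * ((if (k:ℕ) < b then (1:ℝ) else 0) - s2)
      = ((min a b : ℕ) : ℝ) - s2 * a - s1 * b + n * s1 * s2 := by
  have expand : ∀ k : Fin n,
      ((if (k:ℕ) < a then (1:ℝ) else 0) - s1) * ((if (k:ℕ) < b then (1:ℝ) else 0) - s2)
      = ((if (k:ℕ) < min a b then (1:ℝ) else 0) - s2 * (if (k:ℕ) < a then (1:ℝ) else 0))
        - s1 * (if (k:ℕ) < b then (1:ℝ) else 0) + s1 * s2 := by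
    intro k
    by_cases h1 : (k:ℕ) < a <;> by_cases h2 : (k:ℕ) < b <;>
      simp [h1, h2, lt_min_iff] <;> ring
  simp_rw [expand]
  rw [Finset.sum_add_distrib, Finset.sum_sub_distrib, Finset.sum_sub_distrib,
      ← Finset.mul_sum, ← Finset.mul_sum,
      sum_indicator_lt (le_trans (min_le_left a b) ha),
      sum_indicator_lt ha, sum_indicator_lt hb, Finset.sum_const,
      Finset.card_univ, Fintype.card_fin, nsmul_eq_mul]
  ring

/-- Under a change-point at `t ∈ (0,1)` with common covariance matrix `Sig`,
the covariance matrix of the CUSUM process satisfies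
`lim_n n · Cov(Û_n(s1), Û_n(s2)) = (min(s1,s2) - s1 s2) Σ`. -/
theorem cusum_covariance_limit
    (d : ℕ) (t : ℝ) (ht0 : 0 < t) (ht1 : t < 1)
    (P1 P2 : Measure (EuclideanSpace ℝ (Fin d)))
    [IsProbabilityMeasure P1] [IsProbabilityMeasure P2]
    (hP1 : MemLp id 2 P1) (hP2 : MemLp id 2 P2)
    (μ1 μ2 : EuclideanSpace ℝ (Fin d))
    (hμ1 : μ1 = ∫ z, z ∂P1) (hμ2 : μ2 = ∫ z, z ∂P2)
    (Sig : Matrix (Fin d) (Fin d) ℝ)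
    (hSig1 : ∀ i j, Sig i j = ∫ z, (z i - μ1 i) * (z j - μ1 j) ∂P1)
    (hSig2 : ∀ i j, Sig i j = ∫ z, (z i - μ2 i) * (z j - μ2 j) ∂P2)
    (Ω : ℕ → Type) (mΩ : ∀ n, MeasurableSpace (Ω n))
    (P : ∀ n, Measure (Ω n)) (hP : ∀ n, IsProbabilityMeasure (P n))
    (Z : ∀ n : ℕ, Fin n → Ω n → EuclideanSpace ℝ (Fin d))
    (hmeas : ∀ n j, Measurable (Z n j))
    (hindep : ∀ n, iIndepFun (Z n) (P n))
    (hlaw : ∀ n (j : Fin n), Measure.map (Z n j) (P n) =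
      if (j : ℕ) < ⌊(n : ℝ) * t⌋₊ then P1 else P2)
    (U : ∀ n : ℕ, ℝ → Ω n → EuclideanSpace ℝ (Fin d))
    (hU : ∀ n s ω, U n s ω =
      ((1 : ℝ) / n) • (∑ j ∈ Finset.univ.filter (fun j : Fin n => (j : ℕ) < ⌊(n : ℝ) * s⌋₊),
        Z n j ω)
      - (s / n) • (∑ j, Z n j ω)) :
    ∀ s1 ∈ Set.Icc (0:ℝ) 1, ∀ s2 ∈ Set.Icc (0:ℝ) 1, ∀ i j,
      Tendsto (fun (n : ℕ) => (n : ℝ) *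
          ∫ ω, (U n s1 ω i - (∫ ω', U n s1 ω' ∂(P n)) i) *
               (U n s2 ω j - (∫ ω', U n s2 ω' ∂(P n)) j) ∂(P n)) atTop
        (𝓝 ((min s1 s2 - s1 * s2) * Sig i j)) := by
  intro s1 hs1 s2 hs2 i j
  obtain ⟨hs10, hs11⟩ := hs1
  obtain ⟨hs20, hs21⟩ := hs2
  have key : ∀ n : ℕ, 1 ≤ n →
      (n : ℝ) * ∫ ω, (U n s1 ω i - (∫ ω', U n s1 ω' ∂(P n)) i) *
               (U n s2 ω j - (∫ ω', U n s2 ω' ∂(P n)) j) ∂(P n)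
      = (((min ⌊(n:ℝ)*s1⌋₊ ⌊(n:ℝ)*s2⌋₊ : ℕ) : ℝ) - s2 * ⌊(n:ℝ)*s1⌋₊ - s1 * ⌊(n:ℝ)*s2⌋₊
          + n * s1 * s2) / n * Sig i j := by
    intro n hn
    haveI := hP n
    have hNpos : (0:ℝ) < n := by exact_mod_cast hn
    have hn0 : ((n:ℝ)) ≠ 0 := ne_of_gt hNpos
    set nt := ⌊(n:ℝ)*t⌋₊ with hnt
    set Pk : Fin n → Measure (EuclideanSpace ℝ (Fin d)) :=
      fun k => if (k:ℕ) < nt then P1 else P2 with hPk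
    set μv : Fin n → EuclideanSpace ℝ (Fin d) :=
      fun k => if (k:ℕ) < nt then μ1 else μ2 with hμvdef
    have hmapk : ∀ k, Measure.map (Z n k) (P n) = Pk k := fun k => hlaw n k
    have hPkprob : ∀ k, IsProbabilityMeasure (Pk k) := by
      intro k; rw [hPk]; dsimp only; split_ifs <;> infer_instance
    have hPkL2 : ∀ k, MemLp id 2 (Pk k) := by
      intro k; rw [hPk]; dsimp only; split_ifs; exacts [hP1, hP2]
    have hμv : ∀ k, μv k = ∫ z, z ∂(Pk k) := by
      intro k; rw [hPk, hμvdef]; dsimp only; split_ifs; exacts [hμ1, hμ2]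
    have hSigk : ∀ k (i' j' : Fin d),
        Sig i' j' = ∫ z, (z i' - μv k i') * (z j' - μv k j') ∂(Pk k) := by
      intro k i' j'; rw [hPk, hμvdef]; dsimp only; split_ifs
      exacts [hSig1 i' j', hSig2 i' j']
    have hZ2 : ∀ k, MemLp (Z n k) 2 (P n) := by
      intro k
      have h0 : MemLp id 2 (Measure.map (Z n k) (P n)) := by rw [hmapk k]; exact hPkL2 k
      have h1 := (memLp_map_measure_iff aestronglyMeasurable_id (hmeas n k).aemeasurable).mp h0
      simpa [Function.id_comp] using h1
    have hcompL2 : ∀ (i' : Fin d) k, MemLp (fun ω => Z n k ω i') 2 (P n) := by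
      intro i' k
      have h1 := (EuclideanSpace.proj (𝕜 := ℝ) i').comp_memLp' (hZ2 k)
      exact h1
    have hprojz : ∀ (i' : Fin d), Measurable fun z : EuclideanSpace ℝ (Fin d) => z i' :=
      fun i' => (measurable_pi_apply i').comp (WithLp.measurable_ofLp 2 _)
    set Y : Fin d → Fin n → Ω n → ℝ := fun i' k ω => Z n k ω i' - μv k i' with hYdef
    have hYL2 : ∀ i' k, MemLp (Y i' k) 2 (P n) :=
      fun i' k => (hcompL2 i' k).sub (memLp_const _)
    have hYint : ∀ i' k, Integrable (Y i' k) (P n) :=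
      fun i' k => (hYL2 i' k).integrable one_le_two
    have hEZ : ∀ (i' : Fin d) k, ∫ ω, Z n k ω i' ∂(P n) = μv k i' := by
      intro i' k
      have h1 : ∫ ω, Z n k ω i' ∂(P n) = ∫ z, z i' ∂(Pk k) := by
        rw [← hmapk k, integral_map (hmeas n k).aemeasurable (hprojz i').aestronglyMeasurable]
      have hid : Integrable (id : EuclideanSpace ℝ (Fin d) → _) (Pk k) :=
        (hPkL2 k).integrable one_le_two
      have h2 := (EuclideanSpace.proj (𝕜 := ℝ) i').integral_comp_comm hid
      rw [h1, hμv k]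
      simpa using h2
    have hEY0 : ∀ i' k, ∫ ω, Y i' k ω ∂(P n) = 0 := by
      intro i' k
      rw [hYdef]; dsimp only
      rw [integral_sub ((hcompL2 i' k).integrable one_le_two) (integrable_const _),
        hEZ i' k, integral_const]
      simp
    have hcov : ∀ (i' j' : Fin d) k, ∫ ω, Y i' k ω * Y j' k ω ∂(P n) = Sig i' j' := by
      intro i' j' k
      have hg : Measurable fun z : EuclideanSpace ℝ (Fin d) =>
          (z i' - μv k i') * (z j' - μv k j') :=
        ((hprojz i').sub measurable_const).mul ((hprojz j').sub measurable_const)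
      have h1 : ∫ ω, Y i' k ω * Y j' k ω ∂(P n)
          = ∫ z, (z i' - μv k i') * (z j' - μv k j') ∂(Pk k) := by
        rw [← hmapk k, integral_map (hmeas n k).aemeasurable hg.aestronglyMeasurable]
      rw [h1, ← hSigk k i' j']
    have hzero : ∀ (i' j' : Fin d) (k l : Fin n), k ≠ l →
        ∫ ω, Y i' k ω * Y j' l ω ∂(P n) = 0 := by
      intro i' j' k l hkl
      have hind : IndepFun (Z n k) (Z n l) (P n) := (hindep n).indepFun hkl
      have hind2 : IndepFun (Y i' k) (Y j' l) (P n) :=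
        hind.comp ((hprojz i').sub measurable_const) ((hprojz j').sub measurable_const)
      have h1 := hind2.integral_mul_eq_mul_integral (hYint i' k).aestronglyMeasurable (hYint j' l).aestronglyMeasurable
      have h2 : ∫ ω, Y i' k ω * Y j' l ω ∂(P n)
          = (∫ ω, Y i' k ω ∂(P n)) * ∫ ω, Y j' l ω ∂(P n) := h1
      rw [h2, hEY0, hEY0, mul_zero]
    set c : ℝ → Fin n → ℝ :=
      fun s k => ((if (k:ℕ) < ⌊(n:ℝ)*s⌋₊ then (1:ℝ) else 0) - s) / n with hcdef
    have hUvec : ∀ s ω, U n s ω = ∑ k, c s k • Z n k ω := by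
      intro s ω
      rw [hU n s ω, Finset.sum_filter, Finset.smul_sum, Finset.smul_sum,
        ← Finset.sum_sub_distrib]
      refine Finset.sum_congr rfl fun k _ => ?_
      rw [hcdef]; dsimp only
      split_ifs with h
      · rw [← sub_smul]; congr 1; ring
      · simp only [smul_zero, zero_sub]
        rw [← neg_smul]; congr 1; ring
    have hUint : ∀ s, Integrable (U n s) (P n) := by
      intro s
      have h1 : (U n s) = fun ω => ∑ k, c s k • Z n k ω := funext (hUvec s)
      rw [h1]
      exact integrable_finset_sum _ fun k _ => ((hZ2 k).integrable one_le_two).smul (c s k)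
    have hUcompEq : ∀ s (i' : Fin d) ω, U n s ω i' = ∑ k, c s k * Z n k ω i' := by
      intro s i' ω
      rw [hUvec s ω]
      have h1 := map_sum (EuclideanSpace.proj (𝕜 := ℝ) i')
        (fun k => c s k • Z n k ω) Finset.univ
      simp only [_root_.map_smul, smul_eq_mul, PiLp.proj_apply] at h1
      exact h1
    have hEUcomp : ∀ s (i' : Fin d), (∫ ω', U n s ω' ∂(P n)) i' = ∑ k, c s k * μv k i' := by
      intro s i'
      have h2 := (EuclideanSpace.proj (𝕜 := ℝ) i').integral_comp_comm (hUint s)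
      have h3 : ∫ ω, U n s ω i' ∂(P n) = ∑ k, c s k * μv k i' := by
        simp_rw [hUcompEq s i']
        rw [integral_finset_sum _ (fun k _ =>
          ((hcompL2 i' k).integrable one_le_two).const_mul _)]
        exact Finset.sum_congr rfl fun k _ => by rw [integral_const_mul, hEZ i' k]
      rw [← h3]
      simpa using h2.symm
    have hrep : ∀ (s : ℝ) (i' : Fin d) (ω : Ω n),
        U n s ω i' - (∫ ω', U n s ω' ∂(P n)) i' = ∑ k, c s k * Y i' k ω := by
      intro s i' ω
      rw [hUcompEq s i' ω, hEUcomp s i', ← Finset.sum_sub_distrib]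
      refine Finset.sum_congr rfl fun k _ => ?_
      rw [hYdef]; dsimp only; ring
    have hfun1 : (fun ω => (U n s1 ω i - (∫ ω', U n s1 ω' ∂(P n)) i) *
               (U n s2 ω j - (∫ ω', U n s2 ω' ∂(P n)) j))
        = fun ω => ∑ k, ∑ l, (c s1 k * c s2 l) * (Y i k ω * Y j l ω) := by
      funext ω
      rw [hrep s1 i ω, hrep s2 j ω, Finset.sum_mul_sum]
      exact Finset.sum_congr rfl fun k _ => Finset.sum_congr rfl fun l _ => by ring
    have hmain : (∫ ω, (U n s1 ω i - (∫ ω', U n s1 ω' ∂(P n)) i) *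
               (U n s2 ω j - (∫ ω', U n s2 ω' ∂(P n)) j) ∂(P n))
        = ∑ k, (c s1 k * c s2 k) * Sig i j := by
      rw [hfun1]
      rw [integral_finset_sum _ fun k _ => integrable_finset_sum _ fun l _ =>
        (integrable_mul_of_memL2 (hYL2 i k) (hYL2 j l)).const_mul _]
      refine Finset.sum_congr rfl fun k _ => ?_
      rw [integral_finset_sum _ fun l _ =>
        (integrable_mul_of_memL2 (hYL2 i k) (hYL2 j l)).const_mul _]
      rw [Finset.sum_eq_single k]
      · rw [integral_const_mul, hcov i j k]
      · intro l _ hlk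
        rw [integral_const_mul, hzero i j k l (Ne.symm hlk), mul_zero]
      · intro hk; exact absurd (Finset.mem_univ k) hk
    rw [hmain]
    have hcc : ∀ k, (c s1 k * c s2 k) * Sig i j
        = (((if (k:ℕ) < ⌊(n:ℝ)*s1⌋₊ then (1:ℝ) else 0) - s1)
          * ((if (k:ℕ) < ⌊(n:ℝ)*s2⌋₊ then (1:ℝ) else 0) - s2)) / (n*n) * Sig i j := by
      intro k; rw [hcdef]; dsimp only; rw [div_mul_div_comm]
    simp_rw [hcc]
    have hsum : ∑ k : Fin n, (((if (k:ℕ) < ⌊(n:ℝ)*s1⌋₊ then (1:ℝ) else 0) - s1)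
          * ((if (k:ℕ) < ⌊(n:ℝ)*s2⌋₊ then (1:ℝ) else 0) - s2)) / (n*n) * Sig i j
        = ((∑ k : Fin n, ((if (k:ℕ) < ⌊(n:ℝ)*s1⌋₊ then (1:ℝ) else 0) - s1)
          * ((if (k:ℕ) < ⌊(n:ℝ)*s2⌋₊ then (1:ℝ) else 0) - s2)) / (n*n)) * Sig i j := by
      rw [← Finset.sum_mul, ← Finset.sum_div]
    rw [hsum]
    have ha : ⌊(n:ℝ)*s1⌋₊ ≤ n := by
      have h1 : (n:ℝ)*s1 ≤ (n:ℝ) := by nlinarith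
      calc ⌊(n:ℝ)*s1⌋₊ ≤ ⌊(n:ℝ)⌋₊ := Nat.floor_mono h1
        _ = n := Nat.floor_natCast n
    have hb : ⌊(n:ℝ)*s2⌋₊ ≤ n := by
      have h1 : (n:ℝ)*s2 ≤ (n:ℝ) := by nlinarith
      calc ⌊(n:ℝ)*s2⌋₊ ≤ ⌊(n:ℝ)⌋₊ := Nat.floor_mono h1
        _ = n := Nat.floor_natCast n
    rw [sum_ind_prod ha hb s1 s2]
    field_simp
  -- limit of the deterministic expression
  have hmin0 : 0 ≤ min s1 s2 := le_min hs10 hs20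
  have hfloor1 := floor_ratio_tendsto s1 hs10
  have hfloor2 := floor_ratio_tendsto s2 hs20
  have hfloorm := floor_ratio_tendsto (min s1 s2) hmin0
  have hG : Tendsto (fun n : ℕ =>
      ((⌊(n:ℝ)*(min s1 s2)⌋₊ : ℝ)/n - s2 * ((⌊(n:ℝ)*s1⌋₊:ℝ)/n) - s1 * ((⌊(n:ℝ)*s2⌋₊:ℝ)/n)
        + s1*s2) * Sig i j) atTop (𝓝 ((min s1 s2 - s1*s2) * Sig i j)) := by
    have h1 : Tendsto (fun n : ℕ =>
        (⌊(n:ℝ)*(min s1 s2)⌋₊ : ℝ)/n - s2 * ((⌊(n:ℝ)*s1⌋₊:ℝ)/n) - s1 * ((⌊(n:ℝ)*s2⌋₊:ℝ)/n)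
          + s1*s2) atTop (𝓝 (min s1 s2 - s2*s1 - s1*s2 + s1*s2)) :=
      ((hfloorm.sub (hfloor1.const_mul s2)).sub (hfloor2.const_mul s1)).add tendsto_const_nhds
    have h2 := h1.mul_const (Sig i j)
    have hval : min s1 s2 - s2*s1 - s1*s2 + s1*s2 = min s1 s2 - s1*s2 := by ring
    rw [hval] at h2
    exact h2
  refine Tendsto.congr' ?_ hG
  filter_upwards [eventually_ge_atTop 1] with n hn
  have hNpos : (0:ℝ) < n := by exact_mod_cast hn
  have hn0 : ((n:ℝ)) ≠ 0 := ne_of_gt hNpos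
  rw [key n hn]
  have hm : (min ⌊(n:ℝ)*s1⌋₊ ⌊(n:ℝ)*s2⌋₊ : ℕ) = ⌊(n:ℝ)*(min s1 s2)⌋₊ := by
    rw [mul_min_of_nonneg _ _ (le_of_lt hNpos)]
    exact (Nat.floor_mono.map_min).symm
  rw [hm]
  have halg : (⌊(n:ℝ)*(min s1 s2)⌋₊ : ℝ)/n - s2 * ((⌊(n:ℝ)*s1⌋₊:ℝ)/n) - s1 * ((⌊(n:ℝ)*s2⌋₊:ℝ)/n)
        + s1*s2
      = ((⌊(n:ℝ)*(min s1 s2)⌋₊ : ℝ) - s2 * ⌊(n:ℝ)*s1⌋₊ - s1 * ⌊(n:ℝ)*s2⌋₊ + n * s1 * s2) / n := by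
    field_simp
  rw [halg]
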